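/- For n ≥ 2, the number of codimension-two flats of the type D_n reflection arrangement equals (1/6)·n(n-1)(3n²-11n+13). -/

import Mathlib

open LinearMap

/-- The type `D_n` reflection arrangement in `ℝⁿ`: hyperplanes `xᵢ = xⱼ` and
`xᵢ = -xⱼ` for `i ≠ j`. -/
def DnArrangement (n : ℕ) : Set (Submodule ℝ (Fin n → ℝ)) :=
  {H | ∃ i j : Fin n, i ≠ j ∧
        (H = LinearMap.ker ((LinearMap.proj i : (Fin n → ℝ) →ₗ[ℝ] ℝ) - LinearMap.proj j) ∨
         H = LinearMap.ker ((LinearMap.proj i : (Fin n → ℝ) →ₗ[ℝ] ℝ) + LinearMap.proj j))}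

/-- The codimension-two flats of an arrangement: intersections of subfamilies
of hyperplanes having dimension `n - 2`. -/
def codimTwoFlats (n : ℕ) (A : Set (Submodule ℝ (Fin n → ℝ))) :
    Set (Submodule ℝ (Fin n → ℝ)) :=
  {X | (∃ B ⊆ A, X = sInf B) ∧ Module.finrank ℝ X = n - 2}

open Module Finset

section Aux

variable {n : ℕ}

noncomputable def hyp (i j : Fin n) (a : ℝ) : Submodule ℝ (Fin n → ℝ) :=
  LinearMap.ker ((LinearMap.proj j : (Fin n → ℝ) →ₗ[ℝ] ℝ) - a • LinearMap.proj i)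

noncomputable def flat2 (i j k l : Fin n) (a b : ℝ) : Submodule ℝ (Fin n → ℝ) :=
  hyp i j a ⊓ hyp k l b

noncomputable def Zflat (i j : Fin n) : Submodule ℝ (Fin n → ℝ) := flat2 i j i j 1 (-1)

noncomputable def Tflat (i j l : Fin n) (a b : ℝ) : Submodule ℝ (Fin n → ℝ) := flat2 i j i l a b

def Sgn (a : ℝ) : Prop := a = 1 ∨ a = -1

lemma Sgn.sq {a : ℝ} (h : Sgn a) : a * a = 1 := by rcases h with rfl | rfl <;> norm_num

lemma Sgn.ne0 {a : ℝ} (h : Sgn a) : a ≠ 0 := by rcases h with rfl | rfl <;> norm_num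

lemma Sgn.mul {a b : ℝ} (ha : Sgn a) (hb : Sgn b) : Sgn (a * b) := by
  rcases ha with rfl | rfl <;> rcases hb with rfl | rfl <;> simp [Sgn]

lemma mem_hyp {i j : Fin n} {a : ℝ} {x : Fin n → ℝ} : x ∈ hyp i j a ↔ x j = a * x i := by
  simp [hyp, sub_eq_zero]

lemma mem_flat2 {i j k l : Fin n} {a b : ℝ} {x : Fin n → ℝ} :
    x ∈ flat2 i j k l a b ↔ x j = a * x i ∧ x l = b * x k := by
  simp [flat2, Submodule.mem_inf, mem_hyp]

lemma mem_Zflat {i j : Fin n} {x : Fin n → ℝ} : x ∈ Zflat i j ↔ x i = 0 ∧ x j = 0 := by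
  rw [Zflat, mem_flat2]
  constructor
  · rintro ⟨h1, h2⟩; constructor <;> linarith
  · rintro ⟨h1, h2⟩; constructor <;> linarith

lemma mem_Tflat {i j l : Fin n} {a b : ℝ} {x : Fin n → ℝ} :
    x ∈ Tflat i j l a b ↔ x j = a * x i ∧ x l = b * x i := by
  rw [Tflat, mem_flat2]

lemma mem_DnArrangement {H : Submodule ℝ (Fin n → ℝ)} :
    H ∈ DnArrangement n ↔ ∃ i j : Fin n, ∃ a : ℝ, i ≠ j ∧ Sgn a ∧ H = hyp i j a := by
  constructor
  · rintro ⟨i, j, hij, h | h⟩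
    · exact ⟨i, j, 1, hij, Or.inl rfl, by
        rw [h]; ext x; simp [mem_hyp, sub_eq_zero, eq_comm]⟩
    · exact ⟨i, j, -1, hij, Or.inr rfl, by
        rw [h]; ext x; constructor <;> intro hx <;> simp_all [mem_hyp] <;> linarith [hx]⟩
  · rintro ⟨i, j, a, hij, (rfl | rfl), rfl⟩
    · exact ⟨i, j, hij, Or.inl (by ext x; simp [mem_hyp, sub_eq_zero, eq_comm])⟩
    · refine ⟨i, j, hij, Or.inr ?_⟩
      ext x; constructor <;> intro hx <;> simp_all [mem_hyp] <;> linarith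

lemma hyp_ne_zero_fun (i j : Fin n) (a : ℝ) (hij : i ≠ j) :
    ((LinearMap.proj j : (Fin n → ℝ) →ₗ[ℝ] ℝ) - a • LinearMap.proj i) ≠ 0 := by
  intro h
  have := congrArg (fun f => f (Pi.single j (1:ℝ))) h
  simp [Pi.single_apply, hij.symm] at this

lemma finrank_hyp {i j : Fin n} {a : ℝ} (hij : i ≠ j) :
    Module.finrank ℝ (hyp i j a) = n - 1 := by
  have h : Module.finrank ℝ (hyp i j a) + 1 = Module.finrank ℝ (Fin n → ℝ) :=
    Module.Dual.finrank_ker_add_one_of_ne_zero (hyp_ne_zero_fun i j a hij)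
  simp only [Module.finrank_pi, Fintype.card_fin] at h
  omega

lemma finrank_inf_of_ne {H1 H2 : Submodule ℝ (Fin n → ℝ)}
    (h1 : finrank ℝ H1 = n - 1) (h2 : finrank ℝ H2 = n - 1) (hne : H1 ≠ H2) (hn : 1 ≤ n) :
    finrank ℝ (H1 ⊓ H2 : Submodule ℝ (Fin n → ℝ)) = n - 2 := by
  have hlt : H1 < H1 ⊔ H2 := by
    rcases lt_or_eq_of_le (le_sup_left : H1 ≤ H1 ⊔ H2) with h | h
    · exact h
    · exfalso
      have hle : H2 ≤ H1 := by rw [h]; exact le_sup_right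
      exact hne (Submodule.eq_of_le_of_finrank_eq hle (by rw [h1, h2])).symm
  have hsup1 : finrank ℝ H1 < finrank ℝ (H1 ⊔ H2 : Submodule ℝ (Fin n → ℝ)) :=
    Submodule.finrank_lt_finrank_of_lt hlt
  have hsup2 : finrank ℝ (H1 ⊔ H2 : Submodule ℝ (Fin n → ℝ)) ≤ n := by
    have := Submodule.finrank_le (H1 ⊔ H2)
    simpa using this
  have key := Submodule.finrank_sup_add_finrank_inf_eq H1 H2
  rw [h1, h2] at key
  omega

lemma codimTwoFlats_eq_pairs (A : Set (Submodule ℝ (Fin n → ℝ)))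
    (hA : ∀ H ∈ A, finrank ℝ H = n - 1) (hn : 2 ≤ n) :
    codimTwoFlats n A = {X | ∃ H1 ∈ A, ∃ H2 ∈ A, H1 ≠ H2 ∧ X = H1 ⊓ H2} := by
  ext X
  constructor
  · rintro ⟨⟨B, hBA, rfl⟩, hrk⟩
    have hBne : B.Nonempty := by
      by_contra h
      rw [Set.not_nonempty_iff_eq_empty] at h
      subst h
      rw [sInf_empty] at hrk
      have : finrank ℝ (⊤ : Submodule ℝ (Fin n → ℝ)) = n := by
        simp [finrank_top]
      omega
    obtain ⟨H1, hH1⟩ := hBne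
    by_cases hall : ∀ H ∈ B, H = H1
    · exfalso
      have : sInf B = H1 := le_antisymm (sInf_le hH1) (le_sInf fun H hH => (hall H hH) ▸ le_rfl)
      rw [this, hA H1 (hBA hH1)] at hrk
      omega
    · push_neg at hall
      obtain ⟨H2, hH2, hne⟩ := hall
      refine ⟨H1, hBA hH1, H2, hBA hH2, Ne.symm hne, ?_⟩
      have hle : sInf B ≤ H1 ⊓ H2 := le_inf (sInf_le hH1) (sInf_le hH2)
      refine Submodule.eq_of_le_of_finrank_eq hle ?_
      rw [hrk, finrank_inf_of_ne (hA H1 (hBA hH1)) (hA H2 (hBA hH2)) (Ne.symm hne) (by omega)]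
  · rintro ⟨H1, hH1, H2, hH2, hne, rfl⟩
    refine ⟨⟨{H1, H2}, ?_, ?_⟩, ?_⟩
    · intro H hH; rcases hH with rfl | rfl; exact hH1; exact hH2
    · rw [sInf_pair]
    · exact finrank_inf_of_ne (hA H1 hH1) (hA H2 hH2) hne (by omega)

lemma hyp_comm {i j : Fin n} {a : ℝ} (ha : a * a = 1) : hyp i j a = hyp j i a := by
  ext x; rw [mem_hyp, mem_hyp]
  constructor <;> intro h
  · linear_combination (-a) * h + (-(x i)) * ha
  · linear_combination (-a) * h + (-(x j)) * ha

lemma hyp_inf_same {i j : Fin n} {a b : ℝ} (ha : Sgn a) (hb : Sgn b)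
    (hab : a ≠ b) : hyp i j a ⊓ hyp i j b = Zflat i j := by
  ext x; rw [Submodule.mem_inf, mem_hyp, mem_hyp, mem_Zflat]
  rcases ha with rfl | rfl <;> rcases hb with rfl | rfl <;> first
    | (exact absurd rfl hab)
    | (constructor
       · rintro ⟨h1, h2⟩; constructor <;> linarith
       · rintro ⟨h1, h2⟩; constructor <;> linarith)

lemma chain1 {i j l : Fin n} {a b : ℝ} :
    hyp i j a ⊓ hyp j l b = hyp i j a ⊓ hyp i l (b * a) := by
  ext x; simp only [Submodule.mem_inf, mem_hyp]
  constructor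
  · rintro ⟨h1, h2⟩; exact ⟨h1, by rw [h2, h1]; ring⟩
  · rintro ⟨h1, h2⟩; exact ⟨h1, by rw [h2, h1]; ring⟩

lemma chain2 {i j k : Fin n} {a b : ℝ} (hb : b * b = 1) :
    hyp i j a ⊓ hyp k j b = hyp i j a ⊓ hyp i k (b * a) := by
  ext x; simp only [Submodule.mem_inf, mem_hyp]
  constructor
  · rintro ⟨h1, h2⟩
    refine ⟨h1, ?_⟩
    linear_combination b * h1 - b * h2 - x k * hb
  · rintro ⟨h1, h2⟩
    refine ⟨h1, ?_⟩
    linear_combination h1 - b * h2 - (a * x i) * hb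

lemma hyp_ne_of_sign {i j : Fin n} {a b : ℝ} (hij : i ≠ j) (hab : a ≠ b) :
    hyp i j a ≠ hyp i j b := by
  intro h
  have hx : (fun m => if m = i then (1:ℝ) else if m = j then a else 0) ∈ hyp i j a := by
    rw [mem_hyp]; simp [hij.symm, hij]
  rw [h, mem_hyp] at hx
  simp [hij.symm, hij] at hx
  exact hab hx

lemma hyp_ne_of_idx {i j k l : Fin n} {a b : ℝ} (hli : l ≠ i) (hlj : l ≠ j) (hlk : l ≠ k) :
    hyp i j a ≠ hyp k l b := by
  intro h
  have hx : (Pi.single l (1:ℝ)) ∈ hyp i j a := by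
    rw [mem_hyp]; simp [Pi.single_apply, hli.symm, hlj.symm]
  rw [h, mem_hyp] at hx
  simp [Pi.single_apply, hlk.symm] at hx

def IsFlat (X : Submodule ℝ (Fin n → ℝ)) : Prop :=
  (∃ i j : Fin n, i < j ∧ X = Zflat i j) ∨
  (∃ i j l : Fin n, ∃ a b : ℝ, i < j ∧ j < l ∧ Sgn a ∧ Sgn b ∧ X = Tflat i j l a b) ∨
  (∃ i j k l : Fin n, ∃ a b : ℝ, i < j ∧ i < k ∧ k < l ∧ j ≠ k ∧ j ≠ l ∧ Sgn a ∧ Sgn b ∧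
      X = flat2 i j k l a b)

lemma classify_aux {i j k l : Fin n} {a b : ℝ} (hij : i < j) (hkl : k < l)
    (sa : Sgn a) (sb : Sgn b) (hik : i ≤ k) (hne : hyp i j a ≠ hyp k l b) :
    IsFlat (hyp i j a ⊓ hyp k l b) := by
  rcases eq_or_lt_of_le hik with rfl | hik'
  · rcases lt_trichotomy j l with hjl | rfl | hlj
    · exact Or.inr (Or.inl ⟨i, j, l, a, b, hij, hjl, sa, sb, rfl⟩)
    · have hab : a ≠ b := by rintro rfl; exact hne rfl
      exact Or.inl ⟨i, j, hij, hyp_inf_same sa sb hab⟩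
    · refine Or.inr (Or.inl ⟨i, l, j, b, a, hkl, hlj, sb, sa, ?_⟩)
      rw [Tflat, flat2, inf_comm]
  · rcases eq_or_ne j k with rfl | hjk
    · refine Or.inr (Or.inl ⟨i, j, l, a, b * a, hij, hkl, sa, sb.mul sa, ?_⟩)
      rw [Tflat, flat2, chain1]
    · rcases eq_or_ne j l with rfl | hjl
      · refine Or.inr (Or.inl ⟨i, k, j, b * a, a, hik', hkl, sb.mul sa, sa, ?_⟩)
        rw [Tflat, flat2, chain2 sb.sq]; exact inf_comm _ _
      · exact Or.inr (Or.inr ⟨i, j, k, l, a, b, hij, hik', hkl, hjk, hjl, sa, sb, rfl⟩)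

lemma classify {i j k l : Fin n} {a b : ℝ} (hij : i < j) (hkl : k < l)
    (sa : Sgn a) (sb : Sgn b) (hne : hyp i j a ≠ hyp k l b) :
    IsFlat (hyp i j a ⊓ hyp k l b) := by
  rcases le_total i k with h | h
  · exact classify_aux hij hkl sa sb h hne
  · rw [inf_comm]
    exact classify_aux hkl hij sb sa h (Ne.symm hne)

lemma sort_hyp {i j : Fin n} {a : ℝ} (hij : i ≠ j) (sa : Sgn a) :
    ∃ i' j' : Fin n, i' < j' ∧ hyp i j a = hyp i' j' a := by
  rcases lt_or_gt_of_ne hij with h | h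
  · exact ⟨i, j, h, rfl⟩
  · exact ⟨j, i, h, hyp_comm sa.sq⟩

lemma pairs_eq_isFlat :
    {X : Submodule ℝ (Fin n → ℝ) | ∃ H1 ∈ DnArrangement n, ∃ H2 ∈ DnArrangement n,
        H1 ≠ H2 ∧ X = H1 ⊓ H2}
      = {X | IsFlat X} := by
  ext X
  simp only [Set.mem_setOf_eq]
  constructor
  · rintro ⟨H1, h1, H2, h2, hne, rfl⟩
    obtain ⟨i, j, a, hij, sa, rfl⟩ := mem_DnArrangement.mp h1
    obtain ⟨k, l, b, hkl, sb, rfl⟩ := mem_DnArrangement.mp h2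
    obtain ⟨i', j', hij', e1⟩ := sort_hyp hij sa
    obtain ⟨k', l', hkl', e2⟩ := sort_hyp hkl sb
    rw [e1, e2] at hne ⊢
    exact classify hij' hkl' sa sb hne
  · rintro (⟨i, j, hij, rfl⟩ | ⟨i, j, l, a, b, hij, hjl, sa, sb, rfl⟩ |
      ⟨i, j, k, l, a, b, hij, hik, hkl, hjk, hjl, sa, sb, rfl⟩)
    · refine ⟨hyp i j 1, ?_, hyp i j (-1), ?_, ?_, ?_⟩
      · exact mem_DnArrangement.mpr ⟨i, j, 1, hij.ne, Or.inl rfl, rfl⟩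
      · exact mem_DnArrangement.mpr ⟨i, j, -1, hij.ne, Or.inr rfl, rfl⟩
      · exact hyp_ne_of_sign hij.ne (by norm_num)
      · exact (hyp_inf_same (Or.inl rfl) (Or.inr rfl) (by norm_num)).symm
    · refine ⟨hyp i j a, mem_DnArrangement.mpr ⟨i, j, a, hij.ne, sa, rfl⟩,
        hyp i l b, mem_DnArrangement.mpr ⟨i, l, b, (hij.trans hjl).ne, sb, rfl⟩, ?_, rfl⟩
      exact hyp_ne_of_idx (hij.trans hjl).ne' hjl.ne' (hij.trans hjl).ne'
    · exact ⟨hyp i j a, mem_DnArrangement.mpr ⟨i, j, a, hij.ne, sa, rfl⟩,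
        hyp k l b, mem_DnArrangement.mpr ⟨k, l, b, hkl.ne, sb, rfl⟩,
        hyp_ne_of_idx (hik.trans hkl).ne' (Ne.symm hjl) hkl.ne', rfl⟩

lemma single_mem_Zflat {i j m : Fin n} :
    Pi.single m (1:ℝ) ∈ Zflat i j ↔ m ≠ i ∧ m ≠ j := by
  rw [mem_Zflat]
  simp only [Pi.single_apply]
  rcases eq_or_ne m i with rfl | h1 <;> rcases eq_or_ne m j with rfl | h2 <;> simp_all [ne_comm, eq_comm]

lemma single_mem_Tflat {i j l m : Fin n} {a b : ℝ} (hij : i ≠ j) (hil : i ≠ l)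
    (ha : a ≠ 0) (hb : b ≠ 0) :
    Pi.single m (1:ℝ) ∈ Tflat i j l a b ↔ m ≠ i ∧ m ≠ j ∧ m ≠ l := by
  rw [mem_Tflat]
  simp only [Pi.single_apply]
  rcases eq_or_ne m i with rfl | h1 <;> rcases eq_or_ne m j with rfl | h2 <;>
    rcases eq_or_ne m l with rfl | h3 <;> simp_all [ne_comm, eq_comm]

lemma single_mem_flat2 {i j k l m : Fin n} {a b : ℝ} (hij : i ≠ j) (hkl : k ≠ l)
    (hik : i ≠ k) (hil : i ≠ l) (hjk : j ≠ k) (hjl : j ≠ l) (ha : a ≠ 0) (hb : b ≠ 0) :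
    Pi.single m (1:ℝ) ∈ flat2 i j k l a b ↔ m ≠ i ∧ m ≠ j ∧ m ≠ k ∧ m ≠ l := by
  rw [mem_flat2]
  simp only [Pi.single_apply]
  rcases eq_or_ne m i with rfl | h1 <;> rcases eq_or_ne m j with rfl | h2 <;>
    rcases eq_or_ne m k with rfl | h3 <;> rcases eq_or_ne m l with rfl | h4 <;> simp_all [ne_comm, eq_comm]

lemma injZ {i j i' j' : Fin n} (hij : i < j) (hij' : i' < j')
    (h : Zflat i j = Zflat i' j') : i = i' ∧ j = j' := by
  have key : ∀ m : Fin n, (m ≠ i ∧ m ≠ j) ↔ (m ≠ i' ∧ m ≠ j') := by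
    intro m
    rw [← single_mem_Zflat, ← single_mem_Zflat, h]
  have e1 : i' = i ∨ i' = j := by
    by_contra hc; push_neg at hc
    exact absurd ((key i').mp ⟨hc.1, hc.2⟩).1 (by simp)
  have e2 : j' = i ∨ j' = j := by
    by_contra hc; push_neg at hc
    exact absurd ((key j').mp ⟨hc.1, hc.2⟩).2 (by simp)
  have e3 : i = i' ∨ i = j' := by
    by_contra hc; push_neg at hc
    exact absurd ((key i).mpr ⟨hc.1, hc.2⟩).1 (by simp)
  have l1 : i.1 < j.1 := hij
  have l2 : i'.1 < j'.1 := hij'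
  rcases e1 with h1 | h1 <;> rcases e2 with h2 | h2 <;> rcases e3 with h3 | h3 <;>
    (try (apply congrArg Fin.val at h1)) <;> (try (apply congrArg Fin.val at h2)) <;>
    (try (apply congrArg Fin.val at h3)) <;>
    exact ⟨Fin.ext (by omega), Fin.ext (by omega)⟩

lemma injT {i j l i' j' l' : Fin n} {a b a' b' : ℝ} (h1 : i < j) (h2 : j < l)
    (h1' : i' < j') (h2' : j' < l') (sa : Sgn a) (sb : Sgn b) (sa' : Sgn a') (sb' : Sgn b')
    (h : Tflat i j l a b = Tflat i' j' l' a' b') :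
    i = i' ∧ j = j' ∧ l = l' ∧ a = a' ∧ b = b' := by
  have key : ∀ m : Fin n, (m ≠ i ∧ m ≠ j ∧ m ≠ l) ↔ (m ≠ i' ∧ m ≠ j' ∧ m ≠ l') := by
    intro m
    rw [← single_mem_Tflat h1.ne (h1.trans h2).ne sa.ne0 sb.ne0,
        ← single_mem_Tflat h1'.ne (h1'.trans h2').ne sa'.ne0 sb'.ne0, h]
  have mem3 : ∀ m' : Fin n, (m' ≠ i' ∧ m' ≠ j' ∧ m' ≠ l') → False → True := fun _ _ _ => trivial
  have e1 : i' = i ∨ i' = j ∨ i' = l := by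
    by_contra hc; push_neg at hc
    exact absurd ((key i').mp ⟨hc.1, hc.2.1, hc.2.2⟩).1 (by simp)
  have e2 : j' = i ∨ j' = j ∨ j' = l := by
    by_contra hc; push_neg at hc
    exact absurd ((key j').mp ⟨hc.1, hc.2.1, hc.2.2⟩).2.1 (by simp)
  have e3 : l' = i ∨ l' = j ∨ l' = l := by
    by_contra hc; push_neg at hc
    exact absurd ((key l').mp ⟨hc.1, hc.2.1, hc.2.2⟩).2.2 (by simp)
  have o1 : i.1 < j.1 := h1
  have o2 : j.1 < l.1 := h2
  have o1' : i'.1 < j'.1 := h1'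
  have o2' : j'.1 < l'.1 := h2'
  have eidx : i = i' ∧ j = j' ∧ l = l' := by
    rcases e1 with hx | hx | hx <;> rcases e2 with hy | hy | hy <;> rcases e3 with hz | hz | hz <;>
      apply congrArg Fin.val at hx <;> apply congrArg Fin.val at hy <;>
      apply congrArg Fin.val at hz <;>
      exact ⟨Fin.ext (by omega), Fin.ext (by omega), Fin.ext (by omega)⟩
  obtain ⟨rfl, rfl, rfl⟩ := eidx
  -- now signs
  set v : Fin n → ℝ := fun m => if m = i then 1 else if m = j then a else if m = l then b else 0 with hv
  have hvmem : v ∈ Tflat i j l a b := by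
    rw [mem_Tflat]
    constructor
    · simp [hv, h1.ne', h1.ne, (h1.trans h2).ne]
    · simp [hv, (h1.trans h2).ne', h2.ne', h1.ne, (h1.trans h2).ne]
  rw [h, mem_Tflat] at hvmem
  have hvi : v i = 1 := by simp [hv]
  have hvj : v j = a := by simp [hv, h1.ne', h1.ne]
  have hvl : v l = b := by simp [hv, (h1.trans h2).ne', h2.ne']
  rw [hvi, hvj, hvl] at hvmem
  refine ⟨rfl, rfl, rfl, ?_, ?_⟩
  · simpa using hvmem.1
  · simpa using hvmem.2

section P
variable {i j k l i' j' k' l' : Fin n} {a b a' b' : ℝ}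

lemma injP (h1 : i < j) (h2 : i < k) (h3 : k < l) (h4 : j ≠ k) (h5 : j ≠ l)
    (h1' : i' < j') (h2' : i' < k') (h3' : k' < l') (h4' : j' ≠ k') (h5' : j' ≠ l')
    (sa : Sgn a) (sb : Sgn b) (sa' : Sgn a') (sb' : Sgn b')
    (h : flat2 i j k l a b = flat2 i' j' k' l' a' b') :
    i = i' ∧ j = j' ∧ k = k' ∧ l = l' ∧ a = a' ∧ b = b' := by
  have dil : i ≠ l := (h2.trans h3).ne
  have dil' : i' ≠ l' := (h2'.trans h3').ne
  have key : ∀ m : Fin n, (m ≠ i ∧ m ≠ j ∧ m ≠ k ∧ m ≠ l) ↔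
      (m ≠ i' ∧ m ≠ j' ∧ m ≠ k' ∧ m ≠ l') := by
    intro m
    rw [← single_mem_flat2 h1.ne h3.ne h2.ne dil h4 h5 sa.ne0 sb.ne0,
        ← single_mem_flat2 h1'.ne h3'.ne h2'.ne dil' h4' h5' sa'.ne0 sb'.ne0, h]
  -- i = i'
  have e1 : i' = i ∨ i' = j ∨ i' = k ∨ i' = l := by
    by_contra hc; push_neg at hc
    exact absurd ((key i').mp ⟨hc.1, hc.2.1, hc.2.2.1, hc.2.2.2⟩).1 (by simp)
  have e2 : i = i' ∨ i = j' ∨ i = k' ∨ i = l' := by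
    by_contra hc; push_neg at hc
    exact absurd ((key i).mpr ⟨hc.1, hc.2.1, hc.2.2.1, hc.2.2.2⟩).1 (by simp)
  have o1 : i.1 < j.1 := h1
  have o2 : i.1 < k.1 := h2
  have o3 : k.1 < l.1 := h3
  have o1' : i'.1 < j'.1 := h1'
  have o2' : i'.1 < k'.1 := h2'
  have o3' : k'.1 < l'.1 := h3'
  have hii : i = i' := by
    rcases e1 with hx | hx | hx | hx <;> rcases e2 with hy | hy | hy | hy <;>
      apply congrArg Fin.val at hx <;> apply congrArg Fin.val at hy <;>
      exact Fin.ext (by omega)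
  subst hii
  -- u vector
  set u : Fin n → ℝ := fun m => if m = i then 1 else if m = j then a else 0 with hu
  have humem : u ∈ flat2 i j k l a b := by
    rw [mem_flat2]
    constructor
    · simp [hu, h1.ne, h1.ne']
    · simp [hu, h3.ne', h2.ne', dil.symm, h4.symm, h5.symm]
  rw [h, mem_flat2] at humem
  obtain ⟨c1, c2⟩ := humem
  have hui : u i = 1 := by simp [hu]
  -- j' = j and a = a'
  have hjj : j' = j := by
    by_contra hne
    have : u j' = 0 := by simp [hu, h1'.ne', hne]
    rw [this, hui, mul_one] at c1
    exact sa'.ne0 c1.symm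
  subst hjj
  have haa : a = a' := by
    have : u j' = a := by simp [hu, h1.ne, h1.ne']
    rw [this, hui, mul_one] at c1
    exact c1
  -- k' ∈ {k, l}
  have hk'j : k' ≠ j' := Ne.symm h4'
  have hk'kl : k' = k ∨ k' = l := by
    have : ¬ (k' ≠ i ∧ k' ≠ j' ∧ k' ≠ k ∧ k' ≠ l) := fun hc => by
      exact absurd ((key k').mp hc).2.2.1 (by simp)
    by_contra hc; push_neg at hc
    exact this ⟨h2'.ne', hk'j, hc.1, hc.2⟩
  -- l' ∈ {k, l}
  have hl'kl : l' = k ∨ l' = l := by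
    have hl'i : l' ≠ i := (h2'.trans h3').ne'
    have hl'j : l' ≠ j' := Ne.symm h5'
    have : ¬ (l' ≠ i ∧ l' ≠ j' ∧ l' ≠ k ∧ l' ≠ l) := fun hc => by
      exact absurd ((key l').mp hc).2.2.2 (by simp)
    by_contra hc; push_neg at hc
    exact this ⟨hl'i, hl'j, hc.1, hc.2⟩
  have hkk : k' = k ∧ l' = l := by
    rcases hk'kl with hx | hx <;> rcases hl'kl with hy | hy <;>
      apply congrArg Fin.val at hx <;> apply congrArg Fin.val at hy <;>
      refine ⟨Fin.ext (by omega), Fin.ext (by omega)⟩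
  obtain ⟨hk2, hl2⟩ := hkk
  subst hk2
  subst hl2
  -- b = b'
  set w : Fin n → ℝ := fun m => if m = k' then 1 else if m = l' then b else 0 with hw
  have hwmem : w ∈ flat2 i j' k' l' a b := by
    rw [mem_flat2]
    constructor
    · simp [hw, h1.ne, h1.ne', h2.ne, h2.ne', dil, dil.symm, h4, h4.symm, h5, h5.symm]
    · simp [hw, h3.ne, h3.ne']
  rw [h, mem_flat2] at hwmem
  have hbb : b = b' := by
    have e1 : w l' = b := by simp [hw, h3.ne']
    have e2 : w k' = 1 := by simp [hw]
    rw [e1, e2, mul_one] at hwmem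
    exact hwmem.2
  exact ⟨rfl, rfl, rfl, rfl, haa, hbb⟩
end P

lemma notmem2 {m i j : Fin n} (h : ¬ (m ≠ i ∧ m ≠ j)) : m = i ∨ m = j := by
  by_contra hc; push_neg at hc; exact h ⟨hc.1, hc.2⟩

lemma notmem3 {m i j l : Fin n} (h : ¬ (m ≠ i ∧ m ≠ j ∧ m ≠ l)) : m = i ∨ m = j ∨ m = l := by
  by_contra hc; push_neg at hc; exact h ⟨hc.1, hc.2.1, hc.2.2⟩

lemma notmem4 {m i j k l : Fin n} (h : ¬ (m ≠ i ∧ m ≠ j ∧ m ≠ k ∧ m ≠ l)) :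
    m = i ∨ m = j ∨ m = k ∨ m = l := by
  by_contra hc; push_neg at hc; exact h ⟨hc.1, hc.2.1, hc.2.2.1, hc.2.2.2⟩

lemma ZneT {i j i' j' l' : Fin n} {a' b' : ℝ} (hij : i < j) (h1' : i' < j') (h2' : j' < l')
    (sa' : Sgn a') (sb' : Sgn b') : Zflat i j ≠ Tflat i' j' l' a' b' := by
  intro h
  have key : ∀ m : Fin n, (m ≠ i ∧ m ≠ j) ↔ (m ≠ i' ∧ m ≠ j' ∧ m ≠ l') := by
    intro m
    rw [← single_mem_Zflat, ← single_mem_Tflat h1'.ne (h1'.trans h2').ne sa'.ne0 sb'.ne0, h]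
  have e1 : i' = i ∨ i' = j := notmem2 (fun hc => absurd ((key i').mp hc).1 (by simp))
  have e2 : j' = i ∨ j' = j := notmem2 (fun hc => absurd ((key j').mp hc).2.1 (by simp))
  have e3 : l' = i ∨ l' = j := notmem2 (fun hc => absurd ((key l').mp hc).2.2 (by simp))
  have o1' : i'.1 < j'.1 := h1'
  have o2' : j'.1 < l'.1 := h2'
  rcases e1 with hx | hx <;> rcases e2 with hy | hy <;> rcases e3 with hz | hz <;>
    apply congrArg Fin.val at hx <;> apply congrArg Fin.val at hy <;>
    apply congrArg Fin.val at hz <;> omega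

lemma ZneP {i j i' j' k' l' : Fin n} {a' b' : ℝ} (hij : i < j)
    (h1' : i' < j') (h2' : i' < k') (h3' : k' < l') (h4' : j' ≠ k') (h5' : j' ≠ l')
    (sa' : Sgn a') (sb' : Sgn b') : Zflat i j ≠ flat2 i' j' k' l' a' b' := by
  intro h
  have key : ∀ m : Fin n, (m ≠ i ∧ m ≠ j) ↔ (m ≠ i' ∧ m ≠ j' ∧ m ≠ k' ∧ m ≠ l') := by
    intro m
    rw [← single_mem_Zflat, ← single_mem_flat2 h1'.ne h3'.ne h2'.ne (h2'.trans h3').ne h4' h5'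
      sa'.ne0 sb'.ne0, h]
  have e1 : i' = i ∨ i' = j := notmem2 (fun hc => absurd ((key i').mp hc).1 (by simp))
  have e2 : j' = i ∨ j' = j := notmem2 (fun hc => absurd ((key j').mp hc).2.1 (by simp))
  have e3 : k' = i ∨ k' = j := notmem2 (fun hc => absurd ((key k').mp hc).2.2.1 (by simp))
  have o1' : i'.1 < j'.1 := h1'
  have o2' : i'.1 < k'.1 := h2'
  have o4' : j'.1 ≠ k'.1 := fun hv => h4' (Fin.ext hv)
  rcases e1 with hx | hx <;> rcases e2 with hy | hy <;> rcases e3 with hz | hz <;>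
    apply congrArg Fin.val at hx <;> apply congrArg Fin.val at hy <;>
    apply congrArg Fin.val at hz <;> omega

lemma TneP {i j l i' j' k' l' : Fin n} {a b a' b' : ℝ} (h1 : i < j) (h2 : j < l)
    (sa : Sgn a) (sb : Sgn b)
    (h1' : i' < j') (h2' : i' < k') (h3' : k' < l') (h4' : j' ≠ k') (h5' : j' ≠ l')
    (sa' : Sgn a') (sb' : Sgn b') : Tflat i j l a b ≠ flat2 i' j' k' l' a' b' := by
  intro h
  have key : ∀ m : Fin n, (m ≠ i ∧ m ≠ j ∧ m ≠ l) ↔ (m ≠ i' ∧ m ≠ j' ∧ m ≠ k' ∧ m ≠ l') := by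
    intro m
    rw [← single_mem_Tflat h1.ne (h1.trans h2).ne sa.ne0 sb.ne0,
      ← single_mem_flat2 h1'.ne h3'.ne h2'.ne (h2'.trans h3').ne h4' h5' sa'.ne0 sb'.ne0, h]
  have e1 : i' = i ∨ i' = j ∨ i' = l := notmem3 (fun hc => absurd ((key i').mp hc).1 (by simp))
  have e2 : j' = i ∨ j' = j ∨ j' = l := notmem3 (fun hc => absurd ((key j').mp hc).2.1 (by simp))
  have e3 : k' = i ∨ k' = j ∨ k' = l := notmem3 (fun hc => absurd ((key k').mp hc).2.2.1 (by simp))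
  have e4 : l' = i ∨ l' = j ∨ l' = l := notmem3 (fun hc => absurd ((key l').mp hc).2.2.2 (by simp))
  have o1' : i'.1 < j'.1 := h1'
  have o2' : i'.1 < k'.1 := h2'
  have o3' : k'.1 < l'.1 := h3'
  have o4' : j'.1 ≠ k'.1 := fun hv => h4' (Fin.ext hv)
  have o5' : j'.1 ≠ l'.1 := fun hv => h5' (Fin.ext hv)
  have o1 : i.1 < j.1 := h1
  have o2 : j.1 < l.1 := h2
  rcases e1 with hx | hx | hx <;> rcases e2 with hy | hy | hy <;>
    rcases e3 with hz | hz | hz <;> rcases e4 with hw | hw | hw <;>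
    apply congrArg Fin.val at hx <;> apply congrArg Fin.val at hy <;>
    apply congrArg Fin.val at hz <;> apply congrArg Fin.val at hw <;> omega

noncomputable instance : DecidableEq (Submodule ℝ (Fin n → ℝ)) := Classical.decEq _

def sg (s : Bool) : ℝ := if s then 1 else -1

lemma sg_sgn (s : Bool) : Sgn (sg s) := by cases s <;> simp [sg, Sgn]

lemma sgn_ex {a : ℝ} (h : Sgn a) : ∃ s : Bool, sg s = a := by
  rcases h with rfl | rfl
  exacts [⟨true, rfl⟩, ⟨false, rfl⟩]

lemma sg_inj : Function.Injective sg := by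
  intro s t h; cases s <;> cases t <;> simp [sg] at h ⊢ <;> norm_num at h


def qz (N : ℕ) : Finset (ℕ × ℕ) := (range N ×ˢ range N).filter fun p => p.1 < p.2
def qt (N : ℕ) : Finset (ℕ × ℕ × ℕ) :=
  (range N ×ˢ range N ×ˢ range N).filter fun p => p.1 < p.2.1 ∧ p.2.1 < p.2.2
def qm (N : ℕ) : Finset (ℕ × ℕ × ℕ) :=
  (range N ×ˢ range N ×ˢ range N).filter fun p => p.1 < p.2.1 ∧ p.1 < p.2.2 ∧ p.2.1 ≠ p.2.2
def qp (N : ℕ) : Finset (ℕ × ℕ × ℕ × ℕ) :=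
  (range N ×ˢ range N ×ˢ range N ×ˢ range N).filter fun p =>
    p.1 < p.2.1 ∧ p.1 < p.2.2.1 ∧ p.2.2.1 < p.2.2.2 ∧ p.2.1 ≠ p.2.2.1 ∧ p.2.1 ≠ p.2.2.2

lemma qz_succ (N : ℕ) : qz (N + 1) = qz N ∪ (range N).image (fun i => (i, N)) := by
  ext ⟨x, y⟩
  simp only [qz, mem_filter, mem_product, mem_range, mem_union, mem_image, Prod.mk.injEq]
  constructor
  · rintro ⟨⟨hx, hy⟩, hlt⟩
    rcases eq_or_ne y N with rfl | hne
    · exact Or.inr ⟨x, hlt, rfl, rfl⟩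
    · exact Or.inl ⟨⟨by omega, by omega⟩, hlt⟩
  · rintro (⟨⟨hx, hy⟩, hlt⟩ | ⟨a, ha, rfl, rfl⟩)
    · exact ⟨⟨by omega, by omega⟩, hlt⟩
    · exact ⟨⟨by omega, by omega⟩, ha⟩

lemma qz_card (N : ℕ) : 2 * ((qz N).card : ℤ) = N * (N - 1) := by
  induction N with
  | zero => simp [qz]
  | succ N IH =>
    have hd : Disjoint (qz N) ((range N).image (fun i => (i, N))) := by
      rw [disjoint_left]
      rintro ⟨x, y⟩ hx hy
      simp only [qz, mem_filter, mem_product, mem_range, mem_image, Prod.mk.injEq] at hx hy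
      obtain ⟨a, _, rfl, rfl⟩ := hy
      omega
    have hinj : Function.Injective (fun i : ℕ => (i, N)) := by
      intro a b h; simpa using h
    rw [qz_succ, card_union_of_disjoint hd, card_image_of_injective _ hinj, card_range]
    push_cast
    linear_combination IH

lemma qt_succ (N : ℕ) : qt (N + 1) = qt N ∪ (qz N).image (fun p => (p.1, p.2, N)) := by
  ext ⟨x, y, z⟩
  simp only [qt, qz, mem_filter, mem_product, mem_range, mem_union, mem_image, Prod.mk.injEq]
  constructor
  · rintro ⟨⟨hx, hy, hz⟩, h1, h2⟩
    rcases eq_or_ne z N with rfl | hne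
    · exact Or.inr ⟨(x, y), ⟨⟨by omega, by omega⟩, h1⟩, rfl, rfl, rfl⟩
    · exact Or.inl ⟨⟨by omega, by omega, by omega⟩, h1, h2⟩
  · rintro (⟨⟨hx, hy, hz⟩, h1, h2⟩ | ⟨⟨a, b⟩, ⟨⟨ha, hb⟩, hab⟩, rfl, rfl, rfl⟩)
    · exact ⟨⟨by omega, by omega, by omega⟩, h1, h2⟩
    · exact ⟨⟨by omega, by omega, by omega⟩, hab, by omega⟩

lemma qt_card (N : ℕ) : 6 * ((qt N).card : ℤ) = N * (N - 1) * (N - 2) := by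
  induction N with
  | zero => simp [qt]
  | succ N IH =>
    have hd : Disjoint (qt N) ((qz N).image (fun p => (p.1, p.2, N))) := by
      rw [disjoint_left]
      rintro ⟨x, y, z⟩ hx hy
      simp only [qt, qz, mem_filter, mem_product, mem_range, mem_image, Prod.mk.injEq] at hx hy
      obtain ⟨⟨a, b⟩, _, rfl, rfl, rfl⟩ := hy
      omega
    have hinj : Function.Injective (fun p : ℕ × ℕ => (p.1, p.2, N)) := by
      rintro ⟨a, b⟩ ⟨c, d⟩ h; simpa [Prod.ext_iff] using h
    rw [qt_succ, card_union_of_disjoint hd, card_image_of_injective _ hinj]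
    push_cast
    linear_combination IH + 3 * qz_card N

lemma qm_eq (N : ℕ) : qm N = qt N ∪ (qt N).image (fun p => (p.1, p.2.2, p.2.1)) := by
  ext ⟨x, y, z⟩
  simp only [qm, qt, mem_filter, mem_product, mem_range, mem_union, mem_image, Prod.mk.injEq]
  constructor
  · rintro ⟨⟨hx, hy, hz⟩, h1, h2, h3⟩
    rcases lt_or_gt_of_ne h3 with h | h
    · exact Or.inl ⟨⟨hx, hy, hz⟩, h1, h⟩
    · exact Or.inr ⟨(x, z, y), ⟨⟨hx, hz, hy⟩, h2, h⟩, rfl, rfl, rfl⟩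
  · rintro (⟨⟨hx, hy, hz⟩, h1, h2⟩ | ⟨⟨a, b, c⟩, ⟨⟨ha, hb, hc⟩, h1, h2⟩, rfl, rfl, rfl⟩)
    · exact ⟨⟨hx, hy, hz⟩, h1, by omega, by omega⟩
    · exact ⟨⟨by omega, by omega, by omega⟩, by omega, by omega, by omega⟩

lemma qm_card (N : ℕ) : ((qm N).card : ℤ) = 2 * (qt N).card := by
  have hd : Disjoint (qt N) ((qt N).image (fun p => (p.1, p.2.2, p.2.1))) := by
    rw [disjoint_left]
    rintro ⟨x, y, z⟩ hx hy
    simp only [qt, mem_filter, mem_product, mem_range, mem_image, Prod.mk.injEq] at hx hy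
    obtain ⟨⟨a, b, c⟩, hm, rfl, rfl, rfl⟩ := hy
    omega
  have hinj : Function.Injective (fun p : ℕ × ℕ × ℕ => (p.1, p.2.2, p.2.1)) := by
    rintro ⟨a, b, c⟩ ⟨d, e, f⟩ h; simpa [Prod.ext_iff, and_comm] using h
  rw [qm_eq, card_union_of_disjoint hd, card_image_of_injective _ hinj]
  push_cast; ring

lemma qp_succ (N : ℕ) : qp (N + 1) = qp N ∪ ((qm N).image (fun p => (p.1, p.2.1, p.2.2, N))
    ∪ (qt N).image (fun p => (p.1, N, p.2.1, p.2.2))) := by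
  ext ⟨x, y, z, w⟩
  simp only [qp, qm, qt, mem_filter, mem_product, mem_range, mem_union, mem_image,
    Prod.mk.injEq]
  constructor
  · rintro ⟨⟨hx, hy, hz, hw⟩, h1, h2, h3, h4, h5⟩
    rcases eq_or_ne w N with rfl | hw'
    · refine Or.inr (Or.inl ⟨(x, y, z), ⟨⟨?_, ?_, ?_⟩, h1, h2, h4⟩, rfl, rfl, rfl, rfl⟩) <;>
        dsimp only <;> omega
    · rcases eq_or_ne y N with rfl | hy'
      · refine Or.inr (Or.inr ⟨(x, z, w), ⟨⟨?_, ?_, ?_⟩, h2, h3⟩, rfl, rfl, rfl, rfl⟩) <;>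
          dsimp only <;> omega
      · exact Or.inl ⟨⟨by omega, by omega, by omega, by omega⟩, h1, h2, h3, h4, h5⟩
  · rintro (⟨⟨hx, hy, hz, hw⟩, h1, h2, h3, h4, h5⟩ |
      ⟨⟨a, b, c⟩, ⟨⟨ha, hb, hc⟩, h1, h2, h3⟩, rfl, rfl, rfl, rfl⟩ |
      ⟨⟨a, b, c⟩, ⟨⟨ha, hb, hc⟩, h1, h2⟩, rfl, rfl, rfl, rfl⟩)
    · exact ⟨⟨by omega, by omega, by omega, by omega⟩, h1, h2, h3, h4, h5⟩
    · exact ⟨⟨by omega, by omega, by omega, by omega⟩, h1, h2, by omega, h3, by omega⟩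
    · exact ⟨⟨by omega, by omega, by omega, by omega⟩, by omega, h1, h2, by omega, by omega⟩

lemma qp_card (N : ℕ) : 8 * ((qp N).card : ℤ) = N * (N - 1) * (N - 2) * (N - 3) := by
  induction N with
  | zero => simp [qp]
  | succ N IH =>
    have hd1 : Disjoint ((qm N).image (fun p => (p.1, p.2.1, p.2.2, N)))
        ((qt N).image (fun p => (p.1, N, p.2.1, p.2.2))) := by
      rw [disjoint_left]
      rintro ⟨x, y, z, w⟩ hx hy
      simp only [qm, qt, mem_filter, mem_product, mem_range, mem_image, Prod.mk.injEq] at hx hy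
      obtain ⟨⟨a, b, c⟩, hm, rfl, rfl, rfl, rfl⟩ := hx
      obtain ⟨⟨d, e, f⟩, hm', h1, h2, h3, h4⟩ := hy
      omega
    have hd2 : Disjoint (qp N) ((qm N).image (fun p => (p.1, p.2.1, p.2.2, N))
        ∪ (qt N).image (fun p => (p.1, N, p.2.1, p.2.2))) := by
      rw [disjoint_left]
      rintro ⟨x, y, z, w⟩ hx hy
      simp only [qp, qm, qt, mem_filter, mem_product, mem_range, mem_image, mem_union,
        Prod.mk.injEq] at hx hy
      rcases hy with ⟨⟨a, b, c⟩, hm, rfl, rfl, rfl, rfl⟩ | ⟨⟨a, b, c⟩, hm, h1, h2, h3, h4⟩ <;>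
        omega
    have hi1 : Function.Injective (fun p : ℕ × ℕ × ℕ => (p.1, p.2.1, p.2.2, N)) := by
      rintro ⟨a, b, c⟩ ⟨d, e, f⟩ h; simpa [Prod.ext_iff] using h
    have hi2 : Function.Injective (fun p : ℕ × ℕ × ℕ => (p.1, N, p.2.1, p.2.2)) := by
      rintro ⟨a, b, c⟩ ⟨d, e, f⟩ h; simpa [Prod.ext_iff] using h
    rw [qp_succ, card_union_of_disjoint hd2, card_union_of_disjoint hd1,
      card_image_of_injective _ hi1, card_image_of_injective _ hi2]
    push_cast
    linear_combination IH + 8 * qm_card N + 4 * qt_card N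

def Qz (n : ℕ) : Finset (Fin n × Fin n) := univ.filter fun p => p.1 < p.2
def Qt (n : ℕ) : Finset (Fin n × Fin n × Fin n) :=
  univ.filter fun p => p.1 < p.2.1 ∧ p.2.1 < p.2.2
def Qp (n : ℕ) : Finset (Fin n × Fin n × Fin n × Fin n) :=
  univ.filter fun p =>
    p.1 < p.2.1 ∧ p.1 < p.2.2.1 ∧ p.2.2.1 < p.2.2.2 ∧ p.2.1 ≠ p.2.2.1 ∧ p.2.1 ≠ p.2.2.2

lemma Qz_card_eq : (Qz n).card = (qz n).card := by
  apply card_bij (fun p _ => ((p.1 : ℕ), (p.2 : ℕ)))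
  · rintro ⟨i, j⟩ hp
    simp only [Qz, mem_filter, mem_univ, true_and] at hp
    simp only [qz, mem_filter, mem_product, mem_range]
    exact ⟨⟨i.2, j.2⟩, hp⟩
  · rintro ⟨i, j⟩ _ ⟨i', j'⟩ _ h
    simp only [Prod.mk.injEq] at h
    exact Prod.ext (Fin.ext h.1) (Fin.ext h.2)
  · rintro ⟨x, y⟩ hb
    simp only [qz, mem_filter, mem_product, mem_range] at hb
    exact ⟨(⟨x, hb.1.1⟩, ⟨y, hb.1.2⟩), by simp only [Qz, mem_filter, mem_univ, true_and, Fin.lt_def]; exact hb.2, rfl⟩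

lemma Qt_card_eq : (Qt n).card = (qt n).card := by
  apply card_bij (fun p _ => ((p.1 : ℕ), (p.2.1 : ℕ), (p.2.2 : ℕ)))
  · rintro ⟨i, j, l⟩ hp
    simp only [Qt, mem_filter, mem_univ, true_and] at hp
    simp only [qt, mem_filter, mem_product, mem_range]
    exact ⟨⟨i.2, j.2, l.2⟩, hp⟩
  · rintro ⟨i, j, l⟩ _ ⟨i', j', l'⟩ _ h
    simp only [Prod.mk.injEq] at h
    exact Prod.ext (Fin.ext h.1) (Prod.ext (Fin.ext h.2.1) (Fin.ext h.2.2))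
  · rintro ⟨x, y, z⟩ hb
    simp only [qt, mem_filter, mem_product, mem_range] at hb
    exact ⟨(⟨x, hb.1.1⟩, ⟨y, hb.1.2.1⟩, ⟨z, hb.1.2.2⟩),
      by simp only [Qt, mem_filter, mem_univ, true_and, Fin.lt_def]; exact hb.2, rfl⟩

lemma Qp_card_eq : (Qp n).card = (qp n).card := by
  apply card_bij (fun p _ => ((p.1 : ℕ), (p.2.1 : ℕ), (p.2.2.1 : ℕ), (p.2.2.2 : ℕ)))
  · rintro ⟨i, j, k, l⟩ hp
    simp only [Qp, mem_filter, mem_univ, true_and] at hp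
    simp only [qp, mem_filter, mem_product, mem_range]
    refine ⟨⟨i.2, j.2, k.2, l.2⟩, hp.1, hp.2.1, hp.2.2.1, ?_, ?_⟩
    · exact fun h => hp.2.2.2.1 (Fin.ext h)
    · exact fun h => hp.2.2.2.2 (Fin.ext h)
  · rintro ⟨i, j, k, l⟩ _ ⟨i', j', k', l'⟩ _ h
    simp only [Prod.mk.injEq] at h
    exact Prod.ext (Fin.ext h.1)
      (Prod.ext (Fin.ext h.2.1) (Prod.ext (Fin.ext h.2.2.1) (Fin.ext h.2.2.2)))
  · rintro ⟨x, y, z, w⟩ hb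
    simp only [qp, mem_filter, mem_product, mem_range] at hb
    refine ⟨(⟨x, hb.1.1⟩, ⟨y, hb.1.2.1⟩, ⟨z, hb.1.2.2.1⟩, ⟨w, hb.1.2.2.2⟩), ?_, rfl⟩
    simp only [Qp, mem_filter, mem_univ, true_and, Fin.lt_def, Ne, Fin.ext_iff]
    exact ⟨hb.2.1, hb.2.2.1, hb.2.2.2.1, hb.2.2.2.2.1, hb.2.2.2.2.2⟩

noncomputable def Fz : Fin n × Fin n → Submodule ℝ (Fin n → ℝ) := fun p => Zflat p.1 p.2
noncomputable def Ft : (Fin n × Fin n × Fin n) × Bool × Bool → Submodule ℝ (Fin n → ℝ) :=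
  fun q => Tflat q.1.1 q.1.2.1 q.1.2.2 (sg q.2.1) (sg q.2.2)
noncomputable def Fp : (Fin n × Fin n × Fin n × Fin n) × Bool × Bool → Submodule ℝ (Fin n → ℝ) :=
  fun q => flat2 q.1.1 q.1.2.1 q.1.2.2.1 q.1.2.2.2 (sg q.2.1) (sg q.2.2)

noncomputable def Fset (n : ℕ) : Finset (Submodule ℝ (Fin n → ℝ)) :=
  (Qz n).image Fz ∪ ((Qt n) ×ˢ (univ : Finset (Bool × Bool))).image Ft ∪
    ((Qp n) ×ˢ (univ : Finset (Bool × Bool))).image Fp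

lemma isFlat_eq_Fset : {X : Submodule ℝ (Fin n → ℝ) | IsFlat X} = ↑(Fset n) := by
  ext X
  simp only [Set.mem_setOf_eq, Fset, coe_union, Set.mem_union, mem_coe, mem_image, mem_product,
    mem_filter, mem_univ, true_and, Qz, Qt, Qp, Prod.exists, and_true]
  constructor
  · rintro (⟨i, j, hij, rfl⟩ | ⟨i, j, l, a, b, h1, h2, sa, sb, rfl⟩ |
      ⟨i, j, k, l, a, b, h1, h2, h3, h4, h5, sa, sb, rfl⟩)
    · exact Or.inl (Or.inl ⟨i, j, hij, rfl⟩)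
    · obtain ⟨s1, rfl⟩ := sgn_ex sa
      obtain ⟨s2, rfl⟩ := sgn_ex sb
      exact Or.inl (Or.inr ⟨i, j, l, s1, s2, ⟨h1, h2⟩, rfl⟩)
    · obtain ⟨s1, rfl⟩ := sgn_ex sa
      obtain ⟨s2, rfl⟩ := sgn_ex sb
      exact Or.inr ⟨i, j, k, l, s1, s2, ⟨h1, h2, h3, h4, h5⟩, rfl⟩
  · rintro ((⟨i, j, hij, rfl⟩ | ⟨i, j, l, s1, s2, ⟨h1, h2⟩, rfl⟩) |
      ⟨i, j, k, l, s1, s2, ⟨h1, h2, h3, h4, h5⟩, rfl⟩)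
    · exact Or.inl ⟨i, j, hij, rfl⟩
    · exact Or.inr (Or.inl ⟨i, j, l, _, _, h1, h2, sg_sgn s1, sg_sgn s2, rfl⟩)
    · exact Or.inr (Or.inr ⟨i, j, k, l, _, _, h1, h2, h3, h4, h5, sg_sgn s1, sg_sgn s2, rfl⟩)

lemma Fset_card : (Fset n).card = (Qz n).card + 4 * (Qt n).card + 4 * (Qp n).card := by
  have hZT : Disjoint ((Qz n).image Fz) (((Qt n) ×ˢ (univ : Finset (Bool × Bool))).image Ft) := by
    rw [disjoint_left]
    rintro X hX hY
    simp only [mem_image, mem_product, mem_filter, mem_univ, true_and, and_true, Qz, Qt,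
      Prod.exists] at hX hY
    obtain ⟨i, j, hij, rfl⟩ := hX
    obtain ⟨i', j', l', s1, s2, ⟨h1', h2'⟩, hE⟩ := hY
    exact ZneT hij h1' h2' (sg_sgn s1) (sg_sgn s2) hE.symm
  have hZP : Disjoint ((Qz n).image Fz) (((Qp n) ×ˢ (univ : Finset (Bool × Bool))).image Fp) := by
    rw [disjoint_left]
    rintro X hX hY
    simp only [mem_image, mem_product, mem_filter, mem_univ, true_and, and_true, Qz, Qp,
      Prod.exists] at hX hY
    obtain ⟨i, j, hij, rfl⟩ := hX
    obtain ⟨i', j', k', l', s1, s2, ⟨h1', h2', h3', h4', h5'⟩, hE⟩ := hY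
    exact ZneP hij h1' h2' h3' h4' h5' (sg_sgn s1) (sg_sgn s2) hE.symm
  have hTP : Disjoint (((Qt n) ×ˢ (univ : Finset (Bool × Bool))).image Ft)
      (((Qp n) ×ˢ (univ : Finset (Bool × Bool))).image Fp) := by
    rw [disjoint_left]
    rintro X hX hY
    simp only [mem_image, mem_product, mem_filter, mem_univ, true_and, and_true, Qt, Qp,
      Prod.exists] at hX hY
    obtain ⟨i, j, l, s1, s2, ⟨h1, h2⟩, rfl⟩ := hX
    obtain ⟨i', j', k', l', t1, t2, ⟨h1', h2', h3', h4', h5'⟩, hE⟩ := hY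
    exact TneP h1 h2 (sg_sgn s1) (sg_sgn s2) h1' h2' h3' h4' h5' (sg_sgn t1) (sg_sgn t2) hE.symm
  have cz : ((Qz n).image Fz).card = (Qz n).card := by
    apply card_image_of_injOn
    rintro ⟨i, j⟩ hij ⟨i', j'⟩ hij' hE
    simp only [Qz, mem_coe, mem_filter, mem_univ, true_and] at hij hij'
    obtain ⟨rfl, rfl⟩ := injZ hij hij' hE
    rfl
  have ct : (((Qt n) ×ˢ (univ : Finset (Bool × Bool))).image Ft).card = 4 * (Qt n).card := by
    rw [card_image_of_injOn, card_product]
    · simp [mul_comm]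
    rintro ⟨⟨i, j, l⟩, ⟨s1, s2⟩⟩ hq ⟨⟨i', j', l'⟩, ⟨t1, t2⟩⟩ hq' hE
    simp only [Qt, mem_coe, mem_product, mem_filter, mem_univ, true_and, and_true] at hq hq'
    obtain ⟨rfl, rfl, rfl, e1, e2⟩ :=
      injT hq.1 hq.2 hq'.1 hq'.2 (sg_sgn s1) (sg_sgn s2) (sg_sgn t1) (sg_sgn t2) hE
    rw [sg_inj e1, sg_inj e2]
  have cp : (((Qp n) ×ˢ (univ : Finset (Bool × Bool))).image Fp).card = 4 * (Qp n).card := by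
    rw [card_image_of_injOn, card_product]
    · simp [mul_comm]
    rintro ⟨⟨i, j, k, l⟩, ⟨s1, s2⟩⟩ hq ⟨⟨i', j', k', l'⟩, ⟨t1, t2⟩⟩ hq' hE
    simp only [Qp, mem_coe, mem_product, mem_filter, mem_univ, true_and, and_true] at hq hq'
    obtain ⟨rfl, rfl, rfl, rfl, e1, e2⟩ :=
      injP hq.1 hq.2.1 hq.2.2.1 hq.2.2.2.1 hq.2.2.2.2 hq'.1 hq'.2.1 hq'.2.2.1 hq'.2.2.2.1
        hq'.2.2.2.2 (sg_sgn s1) (sg_sgn s2) (sg_sgn t1) (sg_sgn t2) hE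
    rw [sg_inj e1, sg_inj e2]
  rw [Fset, card_union_of_disjoint, card_union_of_disjoint hZT, cz, ct, cp]
  · rw [disjoint_union_left]
    exact ⟨hZP, hTP⟩

end Aux

/-- For `n ≥ 2`, the number of codimension-two flats of the type `D_n`
reflection arrangement equals `n(n-1)(3n²-11n+13)/6`. -/
theorem stmt8 (n : ℕ) (hn : 2 ≤ n) :
    (6 : ℤ) * ((codimTwoFlats n (DnArrangement n)).ncard : ℤ) =
      (n : ℤ) * ((n : ℤ) - 1) * (3 * (n : ℤ) ^ 2 - 11 * (n : ℤ) + 13) := by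
  have hA : ∀ H ∈ DnArrangement n, Module.finrank ℝ H = n - 1 := by
    intro H hH
    obtain ⟨i, j, a, hij, _, rfl⟩ := mem_DnArrangement.mp hH
    exact finrank_hyp hij
  have e1 : codimTwoFlats n (DnArrangement n) = ↑(Fset n) := by
    rw [codimTwoFlats_eq_pairs _ hA hn, pairs_eq_isFlat, isFlat_eq_Fset]
  rw [e1, Set.ncard_coe_finset, Fset_card, Qz_card_eq, Qt_card_eq, Qp_card_eq]
  have h1 := qz_card n
  have h2 := qt_card n
  have h3 := qp_card n
  push_cast
  linear_combination 3 * h1 + 4 * h2 + 3 * h3
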